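/- For 0 ≤ j ≤ k−3, the double-difference row satisfies dΔ^j = (dΔ^{j+1} − 2^j) ∪ (dΔ^{j+1} + 2^j) as sets, where dΔ^j = Δ^{j+1} − Δ^j and Δ^j = X^{j+1} − X^j are termwise differences of rows of the k-bonacci positions table (k ≥ 4 so that dΔ^{j+1} is defined). -/

import Mathlib

/-- The k-bonacci substitution on the alphabet {0,…,k−1}. -/
def subW (k : ℕ) (w : List ℕ) : List ℕ :=
  w.flatMap (fun j => if j + 1 < k then [0, j + 1] else [0])

/-- The k-bonacci word (0-indexed). -/
def kbonacci (k n : ℕ) : ℕ := ((subW k)^[n + 1] [0]).getD n 0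

/-- X^j_n: the 1-based position of the n-th (1-based) occurrence of letter j. -/
noncomputable def Xpos (k j n : ℕ) : ℕ :=
  Nat.nth (fun m => kbonacci k m = j) (n - 1) + 1

/-- Δ^j_n = X^{j+1}_n − X^j_n. -/
noncomputable def Δrow (k j n : ℕ) : ℕ := Xpos k (j + 1) n - Xpos k j n

/-- dΔ^j_n = Δ^{j+1}_n − Δ^j_n. -/
noncomputable def dΔrow (k j n : ℕ) : ℕ := Δrow k (j + 1) n - Δrow k j n

namespace KB

/-- binary valuation -/
def v2 : ℕ → ℕ
  | 0 => 0
  | (t+1) => if (t+1) % 2 = 1 then 0 else v2 ((t+1)/2) + 1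
  decreasing_by exact Nat.div_lt_self (Nat.succ_pos t) one_lt_two

lemma v2_odd {t : ℕ} (h : t % 2 = 1) : v2 t = 0 := by
  cases t with
  | zero => simp at h
  | succ t => rw [v2, if_pos h]

lemma v2_two_mul {t : ℕ} (h : t ≠ 0) : v2 (2 * t) = v2 t + 1 := by
  obtain ⟨s, rfl⟩ : ∃ s, t = s + 1 := ⟨t - 1, by omega⟩
  have h2 : 2 * (s + 1) = (2 * s + 1) + 1 := by ring
  rw [h2, v2, if_neg (by omega)]
  congr 2
  omega

lemma v2_pow (l : ℕ) : v2 (2 ^ l) = l := by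
  induction l with
  | zero => rw [pow_zero, show (1:ℕ)=0+1 from rfl, v2]; norm_num
  | succ l ih => rw [pow_succ, mul_comm, v2_two_mul (by positivity), ih]

lemma v2_le {t l : ℕ} (h1 : 1 ≤ t) (h2 : t ≤ 2 ^ l) : v2 t ≤ l := by
  induction l generalizing t with
  | zero =>
    interval_cases t
    simp [v2]
  | succ l ih =>
    rcases Nat.even_or_odd t with he | ho
    · obtain ⟨s, rfl⟩ := he
      have : s + s = 2 * s := by ring
      rw [this, v2_two_mul (by omega)]
      have := ih (t := s) (by omega) (by rw [pow_succ] at h2; omega)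
      omega
    · rw [v2_odd (Nat.odd_iff.mp ho)]; omega

/-! ### Word groundwork -/

variable {k : ℕ}

/-- iterated word -/
def Wd (k N : ℕ) : List ℕ := (subW k)^[N] [0]

lemma Wd_succ (N : ℕ) : Wd k (N + 1) = subW k (Wd k N) := by
  unfold Wd; rw [Function.iterate_succ_apply']

lemma subW_append (a b : List ℕ) : subW k (a ++ b) = subW k a ++ subW k b :=
  List.flatMap_append

lemma block_of_lt {x : ℕ} (h : x + 1 < k) :
    (if x + 1 < k then [0, x + 1] else [0]) = [0, x + 1] := if_pos h

lemma mem_Wd_lt (hk : 1 ≤ k) {N x : ℕ} (h : x ∈ Wd k N) : x < k := by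
  induction N generalizing x with
  | zero => simp [Wd] at h; omega
  | succ N ih =>
    rw [Wd_succ] at h
    rw [subW, List.mem_flatMap] at h
    obtain ⟨a, ha, hx⟩ := h
    by_cases hc : a + 1 < k
    · rw [if_pos hc] at hx
      simp at hx
      rcases hx with rfl | rfl <;> omega
    · rw [if_neg hc] at hx
      simp at hx
      omega

lemma zero_mem_subW {w : List ℕ} (h : 0 ∈ w) : 0 ∈ subW k w := by
  rw [subW, List.mem_flatMap]
  refine ⟨0, h, ?_⟩
  by_cases hc : (0:ℕ) + 1 < k <;> simp [hc]

lemma zero_mem_Wd (N : ℕ) : 0 ∈ Wd k N := by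
  induction N with
  | zero => simp [Wd]
  | succ N ih => rw [Wd_succ]; exact zero_mem_subW ih

lemma length_le_subW (w : List ℕ) : w.length ≤ (subW k w).length := by
  induction w with
  | nil => simp [subW]
  | cons x t ih =>
    show (x :: t).length ≤ (subW k (x :: t)).length
    have : subW k (x :: t) = (if x + 1 < k then [0, x + 1] else [0]) ++ subW k t := by
      simp [subW]
    rw [this, List.length_append, List.length_cons]
    by_cases hc : x + 1 < k <;> simp [hc] <;> omega

lemma length_lt_subW (hk : 2 ≤ k) {w : List ℕ} (h : 0 ∈ w) :
    w.length < (subW k w).length := by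
  induction w with
  | nil => simp at h
  | cons x t ih =>
    have hb : subW k (x :: t) = (if x + 1 < k then [0, x + 1] else [0]) ++ subW k t := by
      simp [subW]
    rcases List.mem_cons.mp h with rfl | ht
    · rw [hb, if_pos (by omega), List.length_append, List.length_cons]
      have := length_le_subW (k := k) t
      simp; omega
    · rw [hb, List.length_append, List.length_cons]
      have := ih ht
      by_cases hc : x + 1 < k <;> simp [hc] <;> omega

lemma lt_length_Wd (hk : 2 ≤ k) (N : ℕ) : N < (Wd k N).length := by
  induction N with
  | zero => simp [Wd]
  | succ N ih =>
    rw [Wd_succ]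
    have := length_lt_subW hk (zero_mem_Wd (k := k) N)
    omega

lemma Wd_prefix (hk : 2 ≤ k) (N : ℕ) : Wd k N <+: Wd k (N + 1) := by
  induction N with
  | zero =>
    rw [Wd_succ]
    show Wd k 0 <+: subW k (Wd k 0)
    simp only [Wd, Function.iterate_zero_apply]
    have : subW k [0] = [0, 1] := by
      simp [subW]; omega
    rw [this]
    exact ⟨[1], rfl⟩
  | succ N ih =>
    rw [Wd_succ, Wd_succ]
    obtain ⟨t, ht⟩ := ih
    exact ⟨subW k t, by rw [← subW_append, ht, ← Wd_succ]⟩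

lemma Wd_prefix_le (hk : 2 ≤ k) {N M : ℕ} (h : N ≤ M) : Wd k N <+: Wd k M := by
  induction M with
  | zero => rw [Nat.le_zero.mp h]
  | succ M ih =>
    rcases Nat.lt_or_ge N (M+1) with hlt | hge
    · exact (ih (by omega)).trans (Wd_prefix hk M)
    · have : N = M + 1 := by omega
      rw [this]

lemma kb_eq_getD (hk : 2 ≤ k) {i N : ℕ} (h : i < (Wd k N).length) :
    kbonacci k i = (Wd k N).getD i 0 := by
  have hbase : kbonacci k i = (Wd k (i+1)).getD i 0 := rfl
  rcases Nat.le_total N (i+1) with hle | hle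
  · obtain ⟨t, ht⟩ := Wd_prefix_le hk hle
    rw [hbase, ← ht, List.getD_append _ _ _ _ h]
  · obtain ⟨t, ht⟩ := Wd_prefix_le hk hle
    have hi : i < (Wd k (i+1)).length := by
      have := lt_length_Wd hk (i+1); omega
    rw [hbase, ← ht, List.getD_append _ _ _ _ hi]

/-! ### Counts and the prefix-image length function -/

/-- count of letter c among first n letters (0-indexed) -/
noncomputable def cnt (k c n : ℕ) : ℕ := Nat.count (fun m => kbonacci k m = c) n

lemma cnt_succ (c n : ℕ) :
    cnt k c (n + 1) = cnt k c n + if kbonacci k n = c then 1 else 0 := by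
  unfold cnt
  rw [Nat.count_succ]

lemma cnt_le (c n : ℕ) : cnt k c n ≤ n := by
  induction n with
  | zero => simp [cnt]
  | succ n ih => rw [cnt_succ]; split <;> omega

/-- image-prefix-length function: `L q` = length of σ(prefix of length q) -/
noncomputable def Lf (k q : ℕ) : ℕ := 2 * q - cnt k (k - 1) q

lemma count_take (hk : 2 ≤ k) {N q : ℕ} (h : q ≤ (Wd k N).length) (c : ℕ) :
    ((Wd k N).take q).count c = cnt k c q := by
  induction q with
  | zero => simp [cnt]
  | succ q ih =>
    have hq : q < (Wd k N).length := by omega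
    have htake : (Wd k N).take (q+1) = (Wd k N).take q ++ [(Wd k N)[q]] := by
      rw [List.take_succ, List.getElem?_eq_getElem hq]
      rfl
    rw [htake, List.count_append, ih (by omega), cnt_succ]
    have : kbonacci k q = (Wd k N)[q] := by
      rw [kb_eq_getD hk hq, List.getD_eq_getElem _ _ hq]
    rw [← this]
    by_cases hc : kbonacci k q = c
    · simp [List.count_singleton, hc]
    · simp only [List.count_singleton, beq_iff_eq, hc, if_false, if_neg hc]

lemma length_subW_count (hk : 2 ≤ k) {w : List ℕ} (hw : ∀ x ∈ w, x < k) :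
    (subW k w).length + w.count (k - 1) = 2 * w.length := by
  induction w with
  | nil => simp [subW]
  | cons x t ih =>
    have hb : subW k (x :: t) = (if x + 1 < k then [0, x + 1] else [0]) ++ subW k t := by
      simp [subW]
    have hx : x < k := hw x (by simp)
    have ht := ih (fun y hy => hw y (by simp [hy]))
    rw [hb, List.length_append, List.count_cons]
    by_cases hc : x + 1 < k
    · rw [if_pos hc, if_neg (show ¬ ((x == k - 1) = true) by simp; omega)]
      simp only [List.length_cons, List.length_nil]
      omega
    · rw [if_neg hc, if_pos (show ((x == k - 1) = true) by simp; omega)]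
      simp only [List.length_cons, List.length_nil]
      omega

lemma subW_take_length (hk : 2 ≤ k) {N q : ℕ} (h : q ≤ (Wd k N).length) :
    (subW k ((Wd k N).take q)).length = Lf k q := by
  have hlen := length_subW_count hk (w := (Wd k N).take q)
    (fun x hx => mem_Wd_lt (by omega) (List.mem_of_mem_take hx))
  rw [count_take hk h] at hlen
  have h2 : ((Wd k N).take q).length = q := by
    rw [List.length_take]; omega
  rw [h2] at hlen
  have := cnt_le (k := k) (k-1) q
  unfold Lf
  omega

lemma kb_lt (hk : 2 ≤ k) (q : ℕ) : kbonacci k q < k := by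
  have hq : q < (Wd k (q+1)).length := by have := lt_length_Wd hk (q+1); omega
  rw [kb_eq_getD hk hq, List.getD_eq_getElem _ _ hq]
  exact mem_Wd_lt (by omega) (List.getElem_mem _)

lemma Lf_zero : Lf k 0 = 0 := by simp [Lf, cnt]

/-- master block lemma -/
lemma block_master (hk : 2 ≤ k) (q : ℕ) :
    kbonacci k (Lf k q) = 0 ∧
    (kbonacci k q + 1 < k →
      kbonacci k (Lf k q + 1) = kbonacci k q + 1 ∧ Lf k (q+1) = Lf k q + 2) ∧
    (¬ (kbonacci k q + 1 < k) → Lf k (q+1) = Lf k q + 1) := by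
  set N := q + 1 with hN
  have hqlen : q < (Wd k N).length := by have := lt_length_Wd hk N; omega
  set w := Wd k N with hw
  have hx : kbonacci k q = w[q] := by
    rw [kb_eq_getD hk hqlen, List.getD_eq_getElem _ _ hqlen]
  have htake : w.take (q+1) = w.take q ++ [w[q]] := by
    rw [List.take_succ, List.getElem?_eq_getElem hqlen]; rfl
  have hW' : Wd k (N+1) = subW k w := Wd_succ N
  have hsplit : subW k w =
      subW k (w.take q) ++ ((if w[q] + 1 < k then [0, w[q] + 1] else [0]) ++ subW k (w.drop (q+1))) := by
    conv_lhs => rw [← List.take_append_drop (q+1) w]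
    rw [subW_append, htake, subW_append, List.append_assoc]
    congr 2
    simp [subW]
  have hlenA : (subW k (w.take q)).length = Lf k q := subW_take_length hk (by rw [← hw]; omega)
  have hlenA1 : (subW k (w.take (q+1))).length = Lf k (q+1) := subW_take_length hk (by rw [← hw]; omega)
  have hblock : (subW k (w.take (q+1))).length
      = Lf k q + (if w[q] + 1 < k then 2 else 1) := by
    rw [htake, subW_append, List.length_append, hlenA]
    simp [subW]
    split <;> rfl
  -- letters
  have hgetD : ∀ i : ℕ, i < (Wd k (N+1)).length → kbonacci k i = (Wd k (N+1)).getD i 0 :=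
    fun i hi => kb_eq_getD hk hi
  have hlenW' : (Wd k (N+1)).length = (subW k (w.take q)).length +
      (((if w[q] + 1 < k then [0, w[q] + 1] else [0]) ++ subW k (w.drop (q+1))).length) := by
    rw [hW', hsplit, List.length_append]
  have hblocklen : (1:ℕ) ≤ (if w[q] + 1 < k then [0, w[q]+1] else [0]).length := by
    split <;> simp
  constructor
  · have hlt : Lf k q < (Wd k (N+1)).length := by
      rw [hlenW', hlenA]
      have : 1 ≤ ((if w[q] + 1 < k then [0, w[q] + 1] else [0]) ++ subW k (w.drop (q+1))).length := by
        rw [List.length_append]; omega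
      omega
    rw [hgetD _ hlt, hW', hsplit,
      List.getD_append_right _ _ _ _ (by rw [hlenA])]
    rw [hlenA]
    simp
    split <;> simp
  constructor
  · intro hc
    have hcq : w[q] + 1 < k := by rw [← hx]; exact hc
    have h2 : Lf k (q+1) = Lf k q + 2 := by
      rw [← hlenA1, hblock, if_pos hcq]
    refine ⟨?_, h2⟩
    have hlt : Lf k q + 1 < (Wd k (N+1)).length := by
      rw [hlenW', hlenA, List.length_append, if_pos hcq]
      simp
      omega
    rw [hgetD _ hlt, hW', hsplit,
      List.getD_append_right _ _ _ _ (by rw [hlenA]; omega)]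
    rw [hlenA, if_pos hcq]
    have : Lf k q + 1 - Lf k q = 1 := by omega
    rw [this]
    simp [hx]
  · intro hc
    have hcq : ¬ (w[q] + 1 < k) := by rw [← hx]; exact hc
    rw [← hlenA1, hblock, if_neg hcq]

lemma Lf_cnt (q : ℕ) : Lf k q + cnt k (k-1) q = 2 * q := by
  have := cnt_le (k := k) (k-1) q
  unfold Lf
  omega

lemma le_Lf' (q : ℕ) : q ≤ Lf k q := by
  have := cnt_le (k := k) (k-1) q
  unfold Lf; omega

attribute [irreducible] Lf

/-! ### Derived block lemmas -/

lemma kb_L (hk : 2 ≤ k) (q : ℕ) : kbonacci k (Lf k q) = 0 := (block_master hk q).1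

lemma kb_L1 (hk : 2 ≤ k) {q : ℕ} (h : kbonacci k q + 1 < k) :
    kbonacci k (Lf k q + 1) = kbonacci k q + 1 := ((block_master hk q).2.1 h).1

lemma Lf_succ2 (hk : 2 ≤ k) {q : ℕ} (h : kbonacci k q + 1 < k) :
    Lf k (q+1) = Lf k q + 2 := ((block_master hk q).2.1 h).2

lemma Lf_succ1 (hk : 2 ≤ k) {q : ℕ} (h : ¬ (kbonacci k q + 1 < k)) :
    Lf k (q+1) = Lf k q + 1 := (block_master hk q).2.2 h

lemma le_Lf (q : ℕ) : q ≤ Lf k q := le_Lf' q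

lemma decomp (hk : 2 ≤ k) (p : ℕ) :
    ∃ q, p = Lf k q ∨ (p = Lf k q + 1 ∧ kbonacci k q + 1 < k) := by
  induction p with
  | zero => exact ⟨0, Or.inl (by rw [Lf_zero])⟩
  | succ p ih =>
    obtain ⟨q, hq | ⟨hq, hcond⟩⟩ := ih
    · by_cases hc : kbonacci k q + 1 < k
      · exact ⟨q, Or.inr ⟨by omega, hc⟩⟩
      · exact ⟨q + 1, Or.inl (by rw [Lf_succ1 hk hc]; omega)⟩
    · exact ⟨q + 1, Or.inl (by rw [Lf_succ2 hk hcond]; omega)⟩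

lemma parent (hk : 2 ≤ k) {p : ℕ} (h : 1 ≤ kbonacci k p) :
    ∃ q, p = Lf k q + 1 ∧ kbonacci k q + 1 = kbonacci k p ∧ kbonacci k q + 1 < k := by
  obtain ⟨q, hq | ⟨hq, hcond⟩⟩ := decomp hk p
  · rw [hq, kb_L hk] at h; omega
  · exact ⟨q, hq, by rw [hq, kb_L1 hk hcond], hcond⟩

/-! ### Count transfer -/

lemma cnt_zero_L (hk : 2 ≤ k) (q : ℕ) : cnt k 0 (Lf k q) = q := by
  induction q with
  | zero => simp [Lf_zero, cnt]
  | succ q ih =>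
    by_cases hc : kbonacci k q + 1 < k
    · rw [Lf_succ2 hk hc, show Lf k q + 2 = (Lf k q + 1) + 1 from rfl,
        cnt_succ, cnt_succ, ih, kb_L hk, kb_L1 hk hc]
      simp
    · rw [Lf_succ1 hk hc, cnt_succ, ih, kb_L hk]
      simp

lemma cnt_succ_L (hk : 2 ≤ k) {c : ℕ} (hc : c + 1 < k) (q : ℕ) :
    cnt k (c+1) (Lf k q) = cnt k c q := by
  induction q with
  | zero => simp [Lf_zero, cnt]
  | succ q ih =>
    by_cases hcc : kbonacci k q + 1 < k
    · rw [Lf_succ2 hk hcc, show Lf k q + 2 = (Lf k q + 1) + 1 from rfl,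
        cnt_succ, cnt_succ, ih, kb_L hk, kb_L1 hk hcc, cnt_succ]
      have h0 : ¬ ((0:ℕ) = c + 1) := by omega
      rw [if_neg h0]
      by_cases he : kbonacci k q = c
      · rw [if_pos (by omega), if_pos he]
      · rw [if_neg (by omega), if_neg he]
    · have hq : kbonacci k q = k - 1 := by
        have := kb_lt hk q; omega
      rw [Lf_succ1 hk hcc, cnt_succ, ih, kb_L hk, cnt_succ]
      rw [if_neg (by omega), if_neg (by omega)]

/-! ### Infinitude and nth transfer -/

lemma inf_letter (hk : 2 ≤ k) {c : ℕ} (hc : c ≤ k - 1) :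
    {m | kbonacci k m = c}.Infinite := by
  induction c with
  | zero =>
    apply Set.infinite_of_forall_exists_gt
    intro a
    refine ⟨Lf k (a+1), kb_L hk (a+1), ?_⟩
    have := le_Lf (k := k) (a+1); omega
  | succ c ih =>
    apply Set.infinite_of_forall_exists_gt
    intro a
    obtain ⟨p, hp, hpa⟩ := (ih (by omega)).exists_gt a
    refine ⟨Lf k p + 1, ?_, ?_⟩
    · show kbonacci k (Lf k p + 1) = c + 1
      rw [kb_L1 hk (by rw [hp]; omega), hp]
    · have := le_Lf (k := k) p; omega

lemma count_eq_cnt (c n : ℕ) : Nat.count (fun m => kbonacci k m = c) n = cnt k c n := rfl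

lemma nth_transfer (hk : 2 ≤ k) {j : ℕ} (hj : j + 1 < k) (n : ℕ) :
    Nat.nth (fun m => kbonacci k m = j + 1) n
      = Lf k (Nat.nth (fun m => kbonacci k m = j) n) + 1 := by
  have hinfj : {m | kbonacci k m = j}.Infinite := inf_letter hk (by omega)
  set P := Nat.nth (fun m => kbonacci k m = j) n with hP
  have hPj : kbonacci k P = j := Nat.nth_mem_of_infinite hinfj n
  have hcount : Nat.count (fun m => kbonacci k m = j) P = n :=
    Nat.count_nth (fun hf => absurd hf hinfj)
  have hZ : kbonacci k (Lf k P + 1) = j + 1 := by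
    rw [kb_L1 hk (by rw [hPj]; omega), hPj]
  have hcnt : Nat.count (fun m => kbonacci k m = j + 1) (Lf k P + 1) = n := by
    rw [count_eq_cnt, cnt_succ, kb_L hk, if_neg (by omega), cnt_succ_L hk hj, ← count_eq_cnt, hcount]
    omega
  have := Nat.nth_count (p := fun m => kbonacci k m = j + 1) hZ
  rw [hcnt] at this
  exact this

lemma exists_index {c p : ℕ} (h : kbonacci k p = c) :
    ∃ n, 1 ≤ n ∧ Nat.nth (fun m => kbonacci k m = c) (n - 1) = p := by
  refine ⟨Nat.count (fun m => kbonacci k m = c) p + 1, by omega, ?_⟩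
  have h2 : Nat.count (fun m => kbonacci k m = c) p + 1 - 1
      = Nat.count (fun m => kbonacci k m = c) p := by omega
  rw [h2]
  exact Nat.nth_count h

/-! ### Cumulative and window lemmas -/

lemma Lf_add (hk : 2 ≤ k) {a b : ℕ} (hab : a ≤ b)
    (h : ∀ i, a ≤ i → i < b → kbonacci k i + 1 < k) :
    Lf k b = Lf k a + 2 * (b - a) := by
  induction b with
  | zero =>
    have : a = 0 := by omega
    subst this; simp
  | succ b ih =>
    rcases Nat.lt_or_ge a (b+1) with hlt | hge
    · have hb : a ≤ b := by omega
      rw [Lf_succ2 hk (h b hb (by omega)), ih hb (fun i h1 h2 => h i h1 (by omega))]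
      omega
    · have : a = b + 1 := by omega
      subst this; simp

lemma cnt_window {c : ℕ} {a b : ℕ} (hab : a ≤ b)
    (h : ∀ i, a ≤ i → i < b → kbonacci k i ≠ c) :
    cnt k c b = cnt k c a := by
  induction b with
  | zero =>
    have : a = 0 := by omega
    subst this; rfl
  | succ b ih =>
    rcases Nat.lt_or_ge a (b+1) with hlt | hge
    · have hb : a ≤ b := by omega
      rw [cnt_succ, ih hb (fun i h1 h2 => h i h1 (by omega)), if_neg (h b hb (by omega))]
      omega
    · have : a = b + 1 := by omega
      subst this; rfl

/-! ### Ruler lemma -/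

lemma ruler (hk : 2 ≤ k) : ∀ l, l ≤ k - 1 → ∀ p, kbonacci k p = l →
    2 ^ l ≤ p + 1 ∧ ∀ t, 1 ≤ t → t ≤ 2 ^ l → kbonacci k (p + t - 2 ^ l) = v2 t := by
  intro l
  induction l with
  | zero =>
    intro _ p hp
    refine ⟨by simp, fun t ht1 ht2 => ?_⟩
    have : t = 1 := by simpa using Nat.le_antisymm ht2 ht1
    subst this
    simpa [v2_odd (show 1 % 2 = 1 from rfl)] using hp
  | succ l ih =>
    intro hlk p hp
    have hl : l ≤ k - 1 := by omega
    obtain ⟨q, hpq, hqval, hqcond⟩ := parent hk (p := p) (by omega)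
    have hq : kbonacci k q = l := by omega
    obtain ⟨hmin, hlet⟩ := ih hl q hq
    have hpow : (1:ℕ) ≤ 2 ^ l := Nat.one_le_two_pow
    obtain ⟨a, ha⟩ : ∃ a, a = q + 1 - 2 ^ l := ⟨_, rfl⟩
    have haq : a + 2 ^ l = q + 1 := by omega
    -- letters in IH window, rexpressed from a
    have hlet' : ∀ t', 1 ≤ t' → t' ≤ 2 ^ l → kbonacci k (a + t' - 1) = v2 t' := by
      intro t' h1 h2
      have : a + t' - 1 = q + t' - 2 ^ l := by omega
      rw [this]; exact hlet t' h1 h2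
    -- no letter k-1 in [a, a + 2^l)
    have hwin : ∀ i, a ≤ i → i < a + 2 ^ l → kbonacci k i + 1 < k := by
      intro i h1 h2
      have h3 : kbonacci k i = v2 (i - a + 1) := by
        have e1 := hlet' (i - a + 1) (by omega) (by omega)
        have e2 : a + (i - a + 1) - 1 = i := by omega
        rw [e2] at e1
        exact e1
      have := v2_le (l := l) (t := i - a + 1) (by omega) (by omega)
      omega
    have hcum : ∀ t', t' ≤ 2 ^ l → Lf k (a + t') = Lf k a + 2 * t' := by
      intro t' h2
      rw [Lf_add hk (a := a) (by omega) (fun i h1 h2' => hwin i h1 (by omega))]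
      omega
    have hq_eq : q = a + (2 ^ l - 1) := by omega
    have hLq : Lf k q = Lf k a + 2 * (2 ^ l - 1) := by
      rw [hq_eq, hcum _ (by omega)]
    have hp1 : p + 1 = Lf k a + 2 ^ (l+1) := by
      have h2 : (2:ℕ) ^ (l+1) = 2 * 2 ^ l := by ring
      have hpos : (1:ℕ) ≤ 2 ^ l := Nat.one_le_two_pow
      omega
    constructor
    · omega
    · intro t ht1 ht2
      have h2 : (2:ℕ) ^ (l+1) = 2 * 2 ^ l := by ring
      rcases Nat.even_or_odd t with he | ho
      · obtain ⟨t', rfl⟩ := he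
        have ht'1 : 1 ≤ t' := by omega
        have ht'2 : t' ≤ 2 ^ l := by omega
        have hpos : p + (t' + t') - 2 ^ (l+1) = Lf k (a + (t' - 1)) + 1 := by
          rw [hcum _ (by omega)]
          omega
        rw [hpos]
        have hav : kbonacci k (a + (t' - 1)) = v2 t' := by
          have : a + (t' - 1) = a + t' - 1 := by omega
          rw [this]; exact hlet' t' ht'1 ht'2
        have hvle := v2_le ht'1 ht'2
        rw [kb_L1 hk (by rw [hav]; omega), hav]
        have : t' + t' = 2 * t' := by ring
        rw [this, v2_two_mul (by omega)]
      · obtain ⟨t', rfl⟩ := ho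
        have ht'2 : t' ≤ 2 ^ l - 1 := by omega
        have hpos : p + (2 * t' + 1) - 2 ^ (l+1) = Lf k (a + t') := by
          rw [hcum _ (by omega)]
          omega
        rw [hpos, kb_L hk, v2_odd (by omega)]

/-! ### Successor factor lemma -/

lemma succ_factor (hk : 2 ≤ k) : ∀ l, l + 1 ≤ k - 1 → ∀ p, kbonacci k p = l + 1 →
    ∀ t, 1 ≤ t → t ≤ 2 ^ l → kbonacci k (p + t) = v2 t := by
  intro l
  induction l with
  | zero =>
    intro hlk p hp t ht1 ht2
    have : t = 1 := by simpa using Nat.le_antisymm ht2 ht1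
    subst this
    obtain ⟨q, hpq, hqval, hqcond⟩ := parent hk (p := p) (by omega)
    have hq0 : kbonacci k q = 0 := by omega
    have hL : Lf k (q + 1) = Lf k q + 2 := Lf_succ2 hk (by rw [hq0]; omega)
    have : p + 1 = Lf k (q + 1) := by omega
    rw [this, kb_L hk, v2_odd (show 1 % 2 = 1 from rfl)]
  | succ l ih =>
    intro hlk p hp t ht1 ht2
    have hpow : (1:ℕ) ≤ 2 ^ l := Nat.one_le_two_pow
    obtain ⟨q, hpq, hqval, hqcond⟩ := parent hk (p := p) (by omega)
    have hq : kbonacci k q = l + 1 := by omega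
    have hlet := ih (by omega) q hq
    -- no letter k-1 in [q, q + 2^l)
    have hwin : ∀ i, q ≤ i → i < q + 2 ^ l → kbonacci k i + 1 < k := by
      intro i h1 h2
      rcases Nat.eq_or_lt_of_le h1 with rfl | hlt
      · omega
      · have h3 : kbonacci k i = v2 (i - q) := by
          have e1 := hlet (i - q) (by omega) (by omega)
          have e2 : q + (i - q) = i := by omega
          rw [e2] at e1
          exact e1
        have := v2_le (l := l) (t := i - q) (by omega) (by omega)
        omega
    have hcum : ∀ t', t' ≤ 2 ^ l → Lf k (q + t') = Lf k q + 2 * t' := by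
      intro t' h2
      rw [Lf_add hk (a := q) (by omega) (fun i h1 h2' => hwin i h1 (by omega))]
      omega
    have h2 : (2:ℕ) ^ (l+1) = 2 * 2 ^ l := by ring
    rcases Nat.even_or_odd t with he | ho
    · obtain ⟨t', rfl⟩ := he
      have ht'1 : 1 ≤ t' := by omega
      have ht'2 : t' ≤ 2 ^ l := by omega
      have hqt : kbonacci k (q + t') = v2 t' := hlet t' ht'1 ht'2
      have hvle := v2_le (l := l) ht'1 ht'2
      have hpos : p + (t' + t') = Lf k (q + t') + 1 := by
        rw [hcum _ ht'2]; omega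
      rw [hpos, kb_L1 hk (by rw [hqt]; omega), hqt]
      have : t' + t' = 2 * t' := by ring
      rw [this, v2_two_mul (by omega)]
    · obtain ⟨t', rfl⟩ := ho
      have ht'2 : t' + 1 ≤ 2 ^ l := by omega
      have hpos : p + (2 * t' + 1) = Lf k (q + (t' + 1)) := by
        rw [hcum _ ht'2]; omega
      rw [hpos, kb_L hk, v2_odd (by omega)]

/-! ### Dichotomy -/

lemma kb_zero (hk : 2 ≤ k) : kbonacci k 0 = 0 := by
  have := kb_L hk 0
  rwa [Lf_zero] at this

lemma dichotomy (hk : 4 ≤ k) : ∀ l, l + 1 ≤ k - 3 → ∀ p, kbonacci k p = l →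
    kbonacci k (p + 2 ^ l) = l + 1 ∨ (2 ^ l ≤ p ∧ kbonacci k (p - 2 ^ l) = l + 1) := by
  have hk2 : 2 ≤ k := by omega
  intro l
  induction l with
  | zero =>
    intro hlk p hp
    obtain ⟨q, hq | ⟨hq, hcond⟩⟩ := decomp hk2 p
    swap
    · exfalso
      have := kb_L1 hk2 hcond
      rw [← hq, hp] at this
      omega
    subst hq
    rcases Nat.eq_zero_or_pos (kbonacci k q) with hq0 | hqpos
    · left
      have hL : Lf k q + 1 = Lf k q + 1 := rfl
      have := kb_L1 hk2 (q := q) (by omega)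
      rw [hq0] at this
      simpa using this
    · right
      obtain ⟨r, hqr, hrval, hrcond⟩ := parent hk2 hqpos
      have hs : kbonacci k (q - 1) = 0 := by
        have : q - 1 = Lf k r := by omega
        rw [this]; exact kb_L hk2 r
      have hL2 : Lf k q = Lf k (q - 1) + 2 := by
        have : q = (q - 1) + 1 := by omega
        rw [this]
        exact Lf_succ2 hk2 (by rw [hs]; omega)
      have h1 : kbonacci k (Lf k (q-1) + 1) = 1 := by
        have := kb_L1 hk2 (q := q - 1) (by rw [hs]; omega)
        rw [hs] at this
        simpa using this
      constructor
      · omega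
      · have : Lf k q - 2 ^ 0 = Lf k (q-1) + 1 := by
          rw [hL2]; omega
        rw [this, h1]
  | succ l ih =>
    intro hlk p hp
    have hpow : (1:ℕ) ≤ 2 ^ l := Nat.one_le_two_pow
    have h2 : (2:ℕ) ^ (l+1) = 2 * 2 ^ l := by ring
    obtain ⟨q, hpq, hqval, hqcond⟩ := parent hk2 (p := p) (by omega)
    have hq : kbonacci k q = l := by omega
    rcases ih (by omega) q hq with hA | ⟨hBle, hB⟩
    · -- right neighbour at parent level
      left
      obtain ⟨hmin', hlet'⟩ := ruler hk2 (l+1) (by omega) (q + 2 ^ l) hA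
      have hwin : ∀ i, q ≤ i → i < q + 2 ^ l → kbonacci k i + 1 < k := by
        intro i h1 h2'
        rcases Nat.eq_or_lt_of_le h1 with rfl | hlt
        · omega
        · have e1 := hlet' (i - q + 2 ^ l) (by omega) (by omega)
          have e2 : q + 2 ^ l + (i - q + 2 ^ l) - 2 ^ (l+1) = i := by omega
          rw [e2] at e1
          have := v2_le (l := l + 1) (t := i - q + 2 ^ l) (by omega) (by omega)
          omega
      have hcumul : Lf k (q + 2 ^ l) = Lf k q + 2 * 2 ^ l :=
        Lf_add hk2 (by omega) hwin |>.trans (by omega)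
      have hchild : kbonacci k (Lf k (q + 2 ^ l) + 1) = l + 2 := by
        rw [kb_L1 hk2 (by rw [hA]; omega), hA]
      have : p + 2 ^ (l+1) = Lf k (q + 2 ^ l) + 1 := by omega
      rw [this, hchild]
    · -- left neighbour at parent level
      right
      obtain ⟨hmin', hlet'⟩ := ruler hk2 l (by omega) q hq
      have hwin : ∀ i, q - 2 ^ l ≤ i → i < q → kbonacci k i + 1 < k := by
        intro i h1 h2'
        rcases Nat.eq_or_lt_of_le h1 with heq | hlt
        · rw [← heq, hB]; omega
        · have e1 := hlet' (i - (q - 2 ^ l)) (by omega) (by omega)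
          have e2 : q + (i - (q - 2 ^ l)) - 2 ^ l = i := by omega
          rw [e2] at e1
          have := v2_le (l := l) (t := i - (q - 2 ^ l)) (by omega) (by omega)
          omega
      have hcumul : Lf k q = Lf k (q - 2 ^ l) + 2 * 2 ^ l := by
        have := Lf_add hk2 (a := q - 2 ^ l) (b := q) (by omega) hwin
        rw [this]; omega
      have hchild : kbonacci k (Lf k (q - 2 ^ l) + 1) = l + 2 := by
        rw [kb_L1 hk2 (by rw [hB]; omega), hB]
      have hple : 2 ^ (l+1) ≤ p := by omega
      refine ⟨hple, ?_⟩
      have : p - 2 ^ (l+1) = Lf k (q - 2 ^ l) + 1 := by omega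
      rw [this, hchild]

/-! ### Formula for the double difference row -/

lemma dDrow_eq (hk : 4 ≤ k) {j n P : ℕ} (hj1 : j + 1 < k) (hj2 : j + 2 < k)
    (hP : Nat.nth (fun m => kbonacci k m = j) (n - 1) = P) :
    dΔrow k j n = P + 1 - cnt k (k - 2) P := by
  have hk2 : 2 ≤ k := by omega
  have h1 : Nat.nth (fun m => kbonacci k m = j + 1) (n-1) = Lf k P + 1 := by
    rw [nth_transfer hk2 (by omega) (n-1), hP]
  have h2 : Nat.nth (fun m => kbonacci k m = j + 1 + 1) (n-1) = Lf k (Lf k P + 1) + 1 := by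
    rw [nth_transfer hk2 (j := j + 1) (by omega) (n-1), h1]
  unfold dΔrow Δrow Xpos
  rw [h1, h2, hP]
  have e1 : Lf k P + cnt k (k-1) P = 2 * P := Lf_cnt P
  have e2 : Lf k (Lf k P + 1) + cnt k (k-1) (Lf k P + 1) = 2 * (Lf k P + 1) := Lf_cnt _
  have e3 : cnt k (k-1) (Lf k P + 1) = cnt k (k-2) P := by
    rw [cnt_succ, kb_L hk2, if_neg (show ¬((0:ℕ) = k - 1) by omega), Nat.add_zero]
    have hco : k - 2 + 1 = k - 1 := by omega
    calc cnt k (k-1) (Lf k P) = cnt k (k-2+1) (Lf k P) := by rw [hco]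
    _ = cnt k (k-2) P := cnt_succ_L hk2 (by omega) P
  have e4 : cnt k (k-2) P ≤ P := cnt_le _ _
  have e5 : cnt k (k-1) P ≤ P := cnt_le _ _
  omega

end KB

open KB

/-- dΔ^j = (dΔ^{j+1} − 2^j) ∪ (dΔ^{j+1} + 2^j) as sets of values (k ≥ 4, with j
such that both dΔ^j and dΔ^{j+1} are defined, i.e. j + 1 ≤ k − 3). -/
theorem double_difference_union_translates (k j : ℕ) (hk : 4 ≤ k)
    (hj : j + 1 ≤ k - 3) :
    {m | ∃ n, 1 ≤ n ∧ dΔrow k j n = m} =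
      ((fun m => m - 2 ^ j) '' {m | ∃ n, 1 ≤ n ∧ dΔrow k (j + 1) n = m}) ∪
      ((fun m => m + 2 ^ j) '' {m | ∃ n, 1 ≤ n ∧ dΔrow k (j + 1) n = m}) := by
  have hk2 : 2 ≤ k := by omega
  have hinfj : {m | kbonacci k m = j}.Infinite := inf_letter hk2 (by omega)
  have hinfj1 : {m | kbonacci k m = j + 1}.Infinite := inf_letter hk2 (by omega)
  have hpow : (1:ℕ) ≤ 2 ^ j := Nat.one_le_two_pow
  have hpow2 : (2:ℕ) ^ (j+1) = 2 * 2 ^ j := by ring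
  ext m
  simp only [Set.mem_setOf_eq, Set.mem_union, Set.mem_image]
  constructor
  · rintro ⟨n, hn, rfl⟩
    obtain ⟨P, hPdef⟩ : ∃ P, Nat.nth (fun m => kbonacci k m = j) (n - 1) = P := ⟨_, rfl⟩
    have hP : kbonacci k P = j := by
      rw [← hPdef]; exact Nat.nth_mem_of_infinite hinfj (n-1)
    have hF : dΔrow k j n = P + 1 - cnt k (k-2) P :=
      dDrow_eq hk (by omega) (by omega) hPdef
    have hEP := cnt_le (k := k) (k-2) P
    rcases dichotomy hk j hj P hP with hR | ⟨hle, hL⟩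
    · -- the (j+1) sits at P + 2^j ; we are "m = (m + 2^j) - 2^j"
      left
      obtain ⟨n', hn', hn'eq⟩ := exists_index hR
      have hF' : dΔrow k (j+1) n' = (P + 2^j) + 1 - cnt k (k-2) (P + 2^j) :=
        dDrow_eq hk (by omega) (by omega) hn'eq
    -- count of (k-2) does not change on the window
      obtain ⟨hmin', hlet'⟩ := ruler hk2 (j+1) (by omega) (P + 2^j) hR
      have hcnt : cnt k (k-2) (P + 2^j) = cnt k (k-2) P := by
        apply cnt_window (by omega)
        intro i h1 h2
        rcases Nat.eq_or_lt_of_le h1 with rfl | hlt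
        · omega
        · have e1 := hlet' (i - P + 2^j) (by omega) (by omega)
          have e2 : P + 2^j + (i - P + 2^j) - 2^(j+1) = i := by omega
          rw [e2] at e1
          have := v2_le (l := j+1) (t := i - P + 2^j) (by omega) (by omega)
          omega
      refine ⟨dΔrow k (j+1) n', ⟨n', hn', rfl⟩, ?_⟩
      rw [hF', hcnt, hF]
      omega
    · right
      obtain ⟨n', hn', hn'eq⟩ := exists_index hL
      have hF' : dΔrow k (j+1) n' = (P - 2^j) + 1 - cnt k (k-2) (P - 2^j) :=
        dDrow_eq hk (by omega) (by omega) hn'eq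
      have hE' := cnt_le (k := k) (k-2) (P - 2^j)
      have hcnt : cnt k (k-2) P = cnt k (k-2) (P - 2^j) := by
        apply cnt_window (by omega)
        intro i h1 h2
        rcases Nat.eq_or_lt_of_le h1 with heq | hlt
        · rw [← heq, hL]; omega
        · have e1 := succ_factor hk2 j (by omega) (P - 2^j) hL (i - (P - 2^j)) (by omega) (by omega)
          have e2 : P - 2^j + (i - (P - 2^j)) = i := by omega
          rw [e2] at e1
          have := v2_le (l := j) (t := i - (P - 2^j)) (by omega) (by omega)
          omega
      refine ⟨dΔrow k (j+1) n', ⟨n', hn', rfl⟩, ?_⟩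
      rw [hF', ← hcnt, hF]
      omega
  · rintro (⟨v, ⟨n', hn', rfl⟩, rfl⟩ | ⟨v, ⟨n', hn', rfl⟩, rfl⟩)
    · -- m = dΔ' - 2^j ; witness is the j just left of the (j+1)
      obtain ⟨Z, hZdef⟩ : ∃ Z, Nat.nth (fun m => kbonacci k m = j + 1) (n' - 1) = Z := ⟨_, rfl⟩
      have hZ : kbonacci k Z = j + 1 := by
        rw [← hZdef]; exact Nat.nth_mem_of_infinite hinfj1 (n'-1)
      have hF' : dΔrow k (j+1) n' = Z + 1 - cnt k (k-2) Z :=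
        dDrow_eq hk (by omega) (by omega) hZdef
      obtain ⟨hmin', hlet'⟩ := ruler hk2 (j+1) (by omega) Z hZ
      have hy : kbonacci k (Z - 2^j) = j := by
        have e1 := hlet' (2^j) (by omega) (by omega)
        have e2 : Z + 2^j - 2^(j+1) = Z - 2^j := by omega
        rw [e2, v2_pow] at e1
        exact e1
      have hcnt : cnt k (k-2) Z = cnt k (k-2) (Z - 2^j) := by
        apply cnt_window (by omega)
        intro i h1 h2
        rcases Nat.eq_or_lt_of_le h1 with heq | hlt
        · rw [← heq, hy]; omega
        · have e1 := hlet' (i - (Z - 2^j) + 2^j) (by omega) (by omega)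
          have e2 : Z + (i - (Z - 2^j) + 2^j) - 2^(j+1) = i := by omega
          rw [e2] at e1
          have := v2_le (l := j+1) (t := i - (Z - 2^j) + 2^j) (by omega) (by omega)
          omega
      have hE := cnt_le (k := k) (k-2) (Z - 2^j)
      obtain ⟨n, hn, hneq⟩ := exists_index hy
      have hF : dΔrow k j n = (Z - 2^j) + 1 - cnt k (k-2) (Z - 2^j) :=
        dDrow_eq hk (by omega) (by omega) hneq
      refine ⟨n, hn, ?_⟩
      rw [hF, hF', ← hcnt]
      omega
    · -- m = dΔ' + 2^j ; witness is the j just right of the (j+1)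
      obtain ⟨Z, hZdef⟩ : ∃ Z, Nat.nth (fun m => kbonacci k m = j + 1) (n' - 1) = Z := ⟨_, rfl⟩
      have hZ : kbonacci k Z = j + 1 := by
        rw [← hZdef]; exact Nat.nth_mem_of_infinite hinfj1 (n'-1)
      have hF' : dΔrow k (j+1) n' = Z + 1 - cnt k (k-2) Z :=
        dDrow_eq hk (by omega) (by omega) hZdef
      have hy : kbonacci k (Z + 2^j) = j := by
        have e1 := succ_factor hk2 j (by omega) Z hZ (2^j) (by omega) (le_refl _)
        rw [v2_pow] at e1
        exact e1
      have hcnt : cnt k (k-2) (Z + 2^j) = cnt k (k-2) Z := by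
        apply cnt_window (by omega)
        intro i h1 h2
        rcases Nat.eq_or_lt_of_le h1 with rfl | hlt
        · omega
        · have e1 := succ_factor hk2 j (by omega) Z hZ (i - Z) (by omega) (by omega)
          have e2 : Z + (i - Z) = i := by omega
          rw [e2] at e1
          have := v2_le (l := j) (t := i - Z) (by omega) (by omega)
          omega
      have hE := cnt_le (k := k) (k-2) Z
      obtain ⟨n, hn, hneq⟩ := exists_index hy
      have hF : dΔrow k j n = (Z + 2^j) + 1 - cnt k (k-2) (Z + 2^j) :=
        dDrow_eq hk (by omega) (by omega) hneq
      refine ⟨n, hn, ?_⟩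
      rw [hF, hF', hcnt]
      omega
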